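/- For d ≥ 2, the matrix field β ↦ M(β)⁻¹ = f_δ(‖β‖²) I_d - h_δ(‖β‖²) β βᵀ, with f_δ(x) = 2/(√(δ²+4x)+δ) and h_δ(x) = (√(δ²+4x)-δ)/(x√(δ²+4x)(√(δ²+4x)+δ)), is not the Hessian of any C³ scalar potential on ℝ^d \ {0}; indeed the symmetry-of-mixed-partials condition fails because 2 f_δ'(x) + h_δ(x) = -4/(√(δ²+4x)(√(δ²+4x)+δ)²) ≠ 0. -/

import Mathlib

private lemma sqrt_facts {δ x : ℝ} (hx : 0 < x) :
    0 < Real.sqrt (δ^2 + 4*x) ∧ 0 < Real.sqrt (δ^2 + 4*x) + δ := by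
  have h1 : 0 < δ^2 + 4*x := by positivity
  have hs : 0 < Real.sqrt (δ^2 + 4*x) := Real.sqrt_pos.2 h1
  have habs : |δ| < Real.sqrt (δ^2 + 4*x) := by
    have : Real.sqrt (δ^2) < Real.sqrt (δ^2 + 4*x) :=
      Real.sqrt_lt_sqrt (by positivity) (by linarith)
    rwa [Real.sqrt_sq_eq_abs] at this
  refine ⟨hs, ?_⟩
  rcases abs_cases δ with ⟨h, _⟩ | ⟨h, _⟩ <;> linarith

private lemma hasDerivAt_S (δ : ℝ) {x : ℝ} (hx : δ^2 + 4*x ≠ 0) :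
    HasDerivAt (fun y => Real.sqrt (δ^2 + 4*y)) (4 / (2 * Real.sqrt (δ^2 + 4*x))) x := by
  have h1 : HasDerivAt (fun y : ℝ => δ^2 + 4*y) 4 x := by
    simpa using ((hasDerivAt_id x).const_mul (4:ℝ)).const_add (δ^2)
  have := (Real.hasDerivAt_sqrt hx).comp x h1
  simpa [Function.comp_def, div_eq_mul_inv, mul_comm] using this

private lemma hasDerivAt_f {δ : ℝ} (f : ℝ → ℝ)
    (hf : ∀ x, f x = 2 / (Real.sqrt (δ^2 + 4*x) + δ)) {x : ℝ} (hx : 0 < x) :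
    HasDerivAt f (-4 / (Real.sqrt (δ^2 + 4*x) * (Real.sqrt (δ^2 + 4*x) + δ)^2)) x := by
  obtain ⟨hs, hsd⟩ := sqrt_facts (δ := δ) hx
  have hne : δ^2 + 4*x ≠ 0 := by positivity
  have hS := (hasDerivAt_S δ hne).add_const δ
  have hD := (hasDerivAt_const x (2:ℝ)).div hS hsd.ne'
  have hfe : f = fun y => 2 / (Real.sqrt (δ^2 + 4*y) + δ) := funext hf
  rw [hfe]
  convert hD using 1
  have hs' := hs.ne'
  have hsd' := hsd.ne'
  · rfl
  · rfl
  · rfl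
  field_simp
  ring

private lemma h_simplify {δ x : ℝ} (h : ℝ → ℝ)
    (hh : ∀ x, h x = (Real.sqrt (δ^2 + 4*x) - δ) /
        (x * Real.sqrt (δ^2 + 4*x) * (Real.sqrt (δ^2 + 4*x) + δ)))
    (hx : 0 < x) :
    h x = 4 / (Real.sqrt (δ^2 + 4*x) * (Real.sqrt (δ^2 + 4*x) + δ)^2) := by
  obtain ⟨hs, hsd⟩ := sqrt_facts (δ := δ) hx
  have hs2 : Real.sqrt (δ^2 + 4*x) ^ 2 = δ^2 + 4*x := Real.sq_sqrt (by positivity)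
  rw [hh x]
  field_simp
  nlinarith [hs2, hs, hsd]

/-- M⁻¹ = f_δ(‖β‖²) I - h_δ(‖β‖²) ββᵀ is not a Hessian map on ℝ^d \ {0} for d ≥ 2,
because 2 f_δ' + h_δ = -4/(√(δ²+4x)(√(δ²+4x)+δ)²) ≠ 0. -/
theorem Minv_not_hessian_map (d : ℕ) (hd : 2 ≤ d) (δ : ℝ) (f h : ℝ → ℝ)
    (hf : ∀ x, f x = 2 / (Real.sqrt (δ^2 + 4*x) + δ))
    (hh : ∀ x, h x = (Real.sqrt (δ^2 + 4*x) - δ) /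
        (x * Real.sqrt (δ^2 + 4*x) * (Real.sqrt (δ^2 + 4*x) + δ))) :
    (∀ x > 0, 2 * deriv f x + h x
        = -4 / (Real.sqrt (δ^2 + 4*x) * (Real.sqrt (δ^2 + 4*x) + δ)^2) ∧
        2 * deriv f x + h x ≠ 0) ∧
    ¬ ∃ Φ : EuclideanSpace ℝ (Fin d) → ℝ,
      ContDiffOn ℝ 3 Φ {β : EuclideanSpace ℝ (Fin d) | β ≠ 0} ∧
      ∀ β : EuclideanSpace ℝ (Fin d), β ≠ 0 → ∀ i j : Fin d,
        fderiv ℝ (fun b => fderiv ℝ Φ b (EuclideanSpace.single i 1)) β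
            (EuclideanSpace.single j 1)
          = f (‖β‖^2) * (if i = j then (1:ℝ) else 0) - h (‖β‖^2) * (β i * β j) := by
  have key : ∀ x > 0, 2 * deriv f x + h x
      = -4 / (Real.sqrt (δ^2 + 4*x) * (Real.sqrt (δ^2 + 4*x) + δ)^2) := by
    intro x hx
    rw [(hasDerivAt_f f hf hx).deriv, h_simplify h hh hx]
    obtain ⟨hs, hsd⟩ := sqrt_facts (δ := δ) hx
    field_simp
    ring
  have keyne : ∀ x > 0, 2 * deriv f x + h x ≠ 0 := by
    intro x hx
    rw [key x hx]
    obtain ⟨hs, hsd⟩ := sqrt_facts (δ := δ) hx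
    have : 0 < Real.sqrt (δ^2 + 4*x) * (Real.sqrt (δ^2 + 4*x) + δ)^2 := by positivity
    exact div_ne_zero (by norm_num) this.ne'
  refine ⟨fun x hx => ⟨key x hx, keyne x hx⟩, ?_⟩
  rintro ⟨Φ, hΦ, hH⟩
  haveI : NeZero d := ⟨by omega⟩
  set v0 : EuclideanSpace ℝ (Fin d) := EuclideanSpace.single (0 : Fin d) 1 with hv0def
  set v1 : EuclideanSpace ℝ (Fin d) := EuclideanSpace.single (1 : Fin d) 1 with hv1def
  have h10 : (1 : Fin d) ≠ 0 := by
    have hv : ((1 : Fin d) : ℕ) = 1 := by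
      rw [Fin.val_one']
      exact Nat.mod_eq_of_lt (by omega)
    intro hcon
    rw [hcon] at hv
    simp at hv
  have hv0_app0 : v0 0 = 1 := by simp [hv0def, EuclideanSpace.single_apply]
  have hv0_app1 : v0 1 = 0 := by
    simp [hv0def, EuclideanSpace.single_apply, h10]
  have hv1_app0 : v1 0 = 0 := by
    simp [hv1def, EuclideanSpace.single_apply, h10]
  have hv1_app1 : v1 1 = 1 := by simp [hv1def, EuclideanSpace.single_apply]
  have hv0 : v0 ≠ 0 := by
    intro hcon
    have : v0 0 = (0 : EuclideanSpace ℝ (Fin d)) 0 := by rw [hcon]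
    rw [hv0_app0] at this
    simpa using this
  have hnv0 : ‖v0‖ = 1 := by simp [hv0def, EuclideanSpace.norm_single]
  have hnv1 : ‖v1‖ = 1 := by simp [hv1def, EuclideanSpace.norm_single]
  -- g is C² at every nonzero point
  have hg : ∀ β : EuclideanSpace ℝ (Fin d), β ≠ 0 →
      ContDiffAt ℝ 2 (fun b => fderiv ℝ Φ b v1) β := by
    intro β hβ
    have hmem : {β : EuclideanSpace ℝ (Fin d) | β ≠ 0} ∈ nhds β :=
      isOpen_ne.mem_nhds hβ
    have h3 : ContDiffAt ℝ 3 Φ β := hΦ.contDiffAt hmem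
    have h2 : ContDiffAt ℝ 2 (fderiv ℝ Φ) β := h3.fderiv_right (by norm_num)
    exact (ContinuousLinearMap.apply ℝ ℝ v1).contDiff.contDiffAt.comp β h2
  set g : EuclideanSpace ℝ (Fin d) → ℝ := fun b => fderiv ℝ Φ b v1 with hgdef
  have hgD : ContDiffAt ℝ 1 (fderiv ℝ g) v0 := (hg v0 hv0).fderiv_right (by norm_num)
  have hDdiff : DifferentiableAt ℝ (fderiv ℝ g) v0 := hgD.differentiableAt (by norm_num)
  set A := fderiv ℝ (fderiv ℝ g) v0 with hAdef
  have hA : HasFDerivAt (fderiv ℝ g) A v0 := hDdiff.hasFDerivAt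
  have hsymm : A v0 v1 = A v1 v0 := (hg v0 hv0).isSymmSndFDerivAt (by simp) v0 v1
  -- equality of fderiv g with the explicit formula, on nonzero points
  have hgfder : ∀ β : EuclideanSpace ℝ (Fin d), β ≠ 0 → ∀ j : Fin d,
      fderiv ℝ g β (EuclideanSpace.single j 1)
        = f (‖β‖^2) * (if (1 : Fin d) = j then (1:ℝ) else 0) - h (‖β‖^2) * (β 1 * β j) := by
    intro β hβ j
    exact hH β hβ 1 j
  -- First direction: A v0 v1 = 2 * deriv f 1
  have fact1 : A v0 v1 = 2 * deriv f 1 := by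
    have happly : HasFDerivAt (fun b => fderiv ℝ g b v1)
        ((ContinuousLinearMap.apply ℝ ℝ v1).comp A) v0 :=
      (ContinuousLinearMap.apply ℝ ℝ v1).hasFDerivAt.comp v0 hA
    have hline : HasDerivAt (fun t : ℝ => v0 + t • v0) v0 0 := by
      simpa using ((hasDerivAt_id (0:ℝ)).smul_const v0).const_add v0
    have happly' : HasFDerivAt (fun b => fderiv ℝ g b v1)
        ((ContinuousLinearMap.apply ℝ ℝ v1).comp A) (v0 + (0:ℝ) • v0) := by
      simpa using happly
    have hcomp : HasDerivAt (fun t : ℝ => fderiv ℝ g (v0 + t • v0) v1) (A v0 v1) 0 := by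
      have := happly'.comp_hasDerivAt 0 hline
      simpa [Function.comp_def] using this
    -- eventual equality with t ↦ f ((1+t)^2)
    have hev : (fun t : ℝ => f ((1+t)^2)) =ᶠ[nhds (0:ℝ)]
        (fun t : ℝ => fderiv ℝ g (v0 + t • v0) v1) := by
      have hball : Set.Ioo (-1 : ℝ) 1 ∈ nhds (0:ℝ) :=
        Ioo_mem_nhds (by norm_num) (by norm_num)
      filter_upwards [hball] with t ht
      have ht1 : (0:ℝ) < 1 + t := by linarith [ht.1]
      have hβ : v0 + t • v0 = (1 + t) • v0 := by
        rw [add_smul, one_smul]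
      have hβne : v0 + t • v0 ≠ 0 := by
        rw [hβ]
        exact smul_ne_zero ht1.ne' hv0
      have h1 : (v0 + t • v0) 1 = 0 := by
        rw [hβ]
        show (1 + t) * v0 1 = 0
        rw [hv0_app1, mul_zero]
      have hn : ‖v0 + t • v0‖^2 = (1+t)^2 := by
        rw [hβ, norm_smul, hnv0, mul_one, Real.norm_eq_abs, sq_abs]
      rw [hgfder _ hβne 1, hn, h1, if_pos rfl, mul_one, mul_zero, mul_zero, sub_zero]
    have hfd : HasDerivAt f (-4 / (Real.sqrt (δ^2 + 4*1) * (Real.sqrt (δ^2 + 4*1) + δ)^2))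
        ((fun t : ℝ => (1+t)^2) 0) := by
      have := hasDerivAt_f f hf (x := 1) one_pos
      simpa using this
    have hin : HasDerivAt (fun t : ℝ => (1+t)^2) 2 0 := by
      have := ((hasDerivAt_id (0:ℝ)).const_add 1).pow 2
      simpa [Pi.pow_def] using this
    have hexp : HasDerivAt (fun t : ℝ => f ((1+t)^2))
        (-4 / (Real.sqrt (δ^2 + 4*1) * (Real.sqrt (δ^2 + 4*1) + δ)^2) * 2) 0 :=
      hfd.comp 0 hin
    have hcomp' : HasDerivAt (fun t : ℝ => f ((1+t)^2)) (A v0 v1) 0 :=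
      hcomp.congr_of_eventuallyEq hev
    have hderf : deriv f 1 = -4 / (Real.sqrt (δ^2 + 4*1) * (Real.sqrt (δ^2 + 4*1) + δ)^2) :=
      (hasDerivAt_f f hf one_pos).deriv
    rw [hcomp'.unique hexp, hderf]
    ring
  -- h is differentiable at 1
  have hs1 : 0 < Real.sqrt (δ^2 + 4*1) := (sqrt_facts (δ := δ) one_pos).1
  have hsd1 : 0 < Real.sqrt (δ^2 + 4*1) + δ := (sqrt_facts (δ := δ) one_pos).2
  have hhdiff : DifferentiableAt ℝ h 1 := by
    have hhe : h = fun x => (Real.sqrt (δ^2 + 4*x) - δ) /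
        (x * Real.sqrt (δ^2 + 4*x) * (Real.sqrt (δ^2 + 4*x) + δ)) := funext hh
    rw [hhe]
    have hSd : DifferentiableAt ℝ (fun y => Real.sqrt (δ^2 + 4*y)) 1 :=
      (hasDerivAt_S δ (x := 1) (by positivity)).differentiableAt
    have hden : (1 : ℝ) * Real.sqrt (δ^2 + 4*1) * (Real.sqrt (δ^2 + 4*1) + δ) ≠ 0 := by
      positivity
    exact DifferentiableAt.div (hSd.sub_const δ)
      (((differentiableAt_id.mul hSd)).mul (hSd.add_const δ)) hden
  -- Second direction: A v1 v0 = - h 1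
  have fact2 : A v1 v0 = -(h 1) := by
    have happly : HasFDerivAt (fun b => fderiv ℝ g b v0)
        ((ContinuousLinearMap.apply ℝ ℝ v0).comp A) v0 :=
      (ContinuousLinearMap.apply ℝ ℝ v0).hasFDerivAt.comp v0 hA
    have hline : HasDerivAt (fun t : ℝ => v0 + t • v1) v1 0 := by
      simpa using ((hasDerivAt_id (0:ℝ)).smul_const v1).const_add v0
    have happly' : HasFDerivAt (fun b => fderiv ℝ g b v0)
        ((ContinuousLinearMap.apply ℝ ℝ v0).comp A) (v0 + (0:ℝ) • v1) := by
      simpa using happly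
    have hcomp : HasDerivAt (fun t : ℝ => fderiv ℝ g (v0 + t • v1) v0) (A v1 v0) 0 := by
      have := happly'.comp_hasDerivAt 0 hline
      simpa [Function.comp_def] using this
    have heq : ∀ t : ℝ, fderiv ℝ g (v0 + t • v1) v0 = -(h (1 + t^2) * t) := by
      intro t
      have hβ0 : (v0 + t • v1) 0 = 1 := by
        show v0 0 + t * v1 0 = 1
        rw [hv0_app0, hv1_app0, mul_zero, add_zero]
      have hβ1 : (v0 + t • v1) 1 = t := by
        show v0 1 + t * v1 1 = t
        rw [hv0_app1, hv1_app1, mul_one, zero_add]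
      have hβne : v0 + t • v1 ≠ 0 := by
        intro hcon
        have : (v0 + t • v1) 0 = (0 : EuclideanSpace ℝ (Fin d)) 0 := by rw [hcon]
        rw [hβ0] at this
        simpa using this
      have hinner : inner ℝ v0 (t • v1) = (0 : ℝ) := by
        rw [real_inner_smul_right]
        have : inner ℝ v0 v1 = (0:ℝ) := by
          rw [hv0def, hv1def, EuclideanSpace.inner_single_left]
          simp [EuclideanSpace.single_apply, h10]
        rw [this, mul_zero]
      have hn : ‖v0 + t • v1‖^2 = 1 + t^2 := by
        rw [norm_add_sq_real, hinner, hnv0, norm_smul, hnv1, mul_one,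
          Real.norm_eq_abs, sq_abs]
        ring
      have := hgfder _ hβne 0
      rw [hn, hβ0, hβ1] at this
      rw [hv0def] at this ⊢
      rw [this, if_neg h10]
      ring
    have hfun : (fun t : ℝ => fderiv ℝ g (v0 + t • v1) v0)
        = fun t : ℝ => -(h (1 + t^2) * t) := funext heq
    rw [hfun] at hcomp
    have hin2 : HasDerivAt (fun t : ℝ => 1 + t^2) 0 ((0:ℝ)) := by
      have := (hasDerivAt_pow 2 (0:ℝ)).const_add 1
      simpa using this
    have hch : HasDerivAt h (deriv h 1) ((fun t : ℝ => 1 + t^2) 0) := by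
      simpa using hhdiff.hasDerivAt
    have hcompo : HasDerivAt (fun t : ℝ => h (1 + t^2)) (deriv h 1 * 0) 0 :=
      hch.comp 0 hin2
    have hprod : HasDerivAt (fun t : ℝ => h (1 + t^2) * t)
        (deriv h 1 * 0 * 0 + h (1 + 0^2) * 1) 0 :=
      hcompo.mul (hasDerivAt_id 0)
    have hexp : HasDerivAt (fun t : ℝ => -(h (1 + t^2) * t)) (-(h 1)) 0 := by
      have := hprod.neg
      norm_num at this
      simpa [Pi.neg_def] using this
    exact hcomp.unique hexp
  -- contradiction
  have : 2 * deriv f 1 + h 1 = 0 := by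
    have := fact1 ▸ fact2 ▸ hsymm
    linarith [this]
  exact keyne 1 one_pos this
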